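/- Let M be a nonzero finite-dimensional complex vector space that is an irreducible Lie module over gl_m (m ≥ 1). Then the subspace M^{so_m} := {v ∈ M : x·v = 0 for all x ∈ so_m} has dimension at most 1. (This is the purely even case n = 0 of the paper's lemma that an irreducible finite-dimensional gl(m|2n)-module has at most a one-dimensional space of osp(m|2n)-invariant vectors.) -/

import Mathlib

/-!
STATEMENT 15: If M is a nonzero finite-dimensional irreducible Lie module over gl_m, then the
space of so_m-invariant vectors in M has dimension at most 1.
-/

noncomputable section

open Matrix

attribute [local instance 100] LieRing.ofAssociativeRing

abbrev MatC (m : ℕ) := Matrix (Fin m) (Fin m) ℂ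

/-- The subspace of vectors annihilated by all skew-symmetric matrices (so_m-invariants). -/
def soInvariants (m : ℕ) (M : Type*) [AddCommGroup M] [Module ℂ M]
    [LieRingModule (MatC m) M] [LieModule ℂ (MatC m) M] : Submodule ℂ M where
  carrier := {v | ∀ x : MatC m, xᵀ = -x → ⁅x, v⁆ = 0}
  add_mem' := by
    intro a b ha hb
    intro x hx
    rw [lie_add, ha x hx, hb x hx, add_zero]
  zero_mem' := by
    intro x _
    exact lie_zero x
  smul_mem' := by
    intro c a ha
    intro x hx
    rw [lie_smul, ha x hx, smul_zero]

namespace S15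
open LieModule
variable (m : ℕ)

/-- Diagonal matrices form a Lie subalgebra. -/
def diagSub : LieSubalgebra ℂ (MatC m) where
  carrier := {x | ∃ d : Fin m → ℂ, x = Matrix.diagonal d}
  zero_mem' := ⟨0, Matrix.diagonal_zero.symm⟩
  add_mem' := by rintro x y ⟨d, rfl⟩ ⟨e, rfl⟩; exact ⟨d + e, by simp [Matrix.diagonal_add]⟩
  smul_mem' := by rintro c x ⟨d, rfl⟩; exact ⟨c • d, by simp [Matrix.diagonal_smul]⟩
  lie_mem' := by
    rintro x y ⟨d, rfl⟩ ⟨e, rfl⟩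
    refine ⟨0, ?_⟩; rw [Ring.lie_def, Matrix.diagonal_mul_diagonal, Matrix.diagonal_mul_diagonal]; ext a b; by_cases h : a = b <;> simp [h, mul_comm]

instance : IsLieAbelian ↥(diagSub m) where
  trivial := by
    rintro ⟨x, hx⟩ ⟨y, hy⟩
    obtain ⟨d, rfl⟩ := hx
    obtain ⟨e, rfl⟩ := hy
    ext1
    rw [LieSubalgebra.coe_bracket]
    simp [Ring.lie_def, Matrix.diagonal_mul_diagonal, mul_comm]

/-- Upper triangular matrices form a Lie subalgebra. -/
def upSub : LieSubalgebra ℂ (MatC m) where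
  carrier := {x | ∀ ⦃i j : Fin m⦄, j < i → x i j = 0}
  zero_mem' := by intro i j _; rfl
  add_mem' := by intro x y hx hy i j hij; simp [hx hij, hy hij]
  smul_mem' := by intro c x hx i j hij; simp [hx hij]
  lie_mem' := by
    intro x y hx hy i j hij
    have mul0 : ∀ a b : MatC m, (∀ ⦃i j : Fin m⦄, j < i → a i j = 0) →
        (∀ ⦃i j : Fin m⦄, j < i → b i j = 0) → (a * b) i j = 0 := by
      intro a b ha hb
      rw [Matrix.mul_apply]
      refine Finset.sum_eq_zero fun k _ => ?_
      rcases lt_or_ge k i with h | h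
      · rw [ha h, zero_mul]
      · rw [hb (lt_of_lt_of_le hij h), mul_zero]
    simp [Ring.lie_def, mul0 x y hx hy, mul0 y x hy hx]
open LieModule

variable (m : ℕ) (M : Type*) [AddCommGroup M] [Module ℂ M]
  [LieRingModule (MatC m) M] [LieModule ℂ (MatC m) M]

/-- The dual space as a type synonym, to carry the contragredient Lie module structure. -/
def Dl (m : ℕ) (M : Type*) [AddCommGroup M] [Module ℂ M] [LieRingModule (MatC m) M] :
    Type _ := Module.Dual ℂ M

instance : AddCommGroup (Dl m M) := inferInstanceAs (AddCommGroup (Module.Dual ℂ M))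
instance : Module ℂ (Dl m M) := inferInstanceAs (Module ℂ (Module.Dual ℂ M))

variable {m M}

/-- View an element of `Dl` as a linear functional. -/
def Dl.toDual (f : Dl m M) : Module.Dual ℂ M := f

/-- The contragredient bracket. -/
def dbr (x : MatC m) (f : Dl m M) : Dl m M :=
  (-(Dl.toDual f ∘ₗ (toEnd ℂ (MatC m) M x)) : Module.Dual ℂ M)

lemma dbr_apply (x : MatC m) (f : Dl m M) (w : M) :
    Dl.toDual (dbr x f) w = - Dl.toDual f ⁅x, w⁆ := rfl

instance : LieRingModule (MatC m) (Dl m M) where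
  bracket := dbr
  add_lie x y f := by
    show dbr (x + y) f = dbr x f + dbr y f
    apply LinearMap.ext; intro w
    show Dl.toDual (dbr (x+y) f) w = Dl.toDual (dbr x f) w + Dl.toDual (dbr y f) w
    simp only [dbr_apply, add_lie, map_add]
    ring
  lie_add x f g := by
    apply LinearMap.ext; intro w
    show Dl.toDual (dbr x (f + g)) w = Dl.toDual (dbr x f) w + Dl.toDual (dbr x g) w
    have : Dl.toDual (f + g) = Dl.toDual f + Dl.toDual g := rfl
    simp only [dbr_apply, this, LinearMap.add_apply]
    ring
  leibniz_lie x y f := by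
    apply LinearMap.ext; intro w
    show Dl.toDual (dbr x (dbr y f)) w
      = Dl.toDual (dbr ⁅x, y⁆ f) w + Dl.toDual (dbr y (dbr x f)) w
    simp only [dbr_apply, lie_lie, map_sub]
    ring

lemma Dl.lie_apply (x : MatC m) (f : Dl m M) (w : M) :
    Dl.toDual ⁅x, f⁆ w = - Dl.toDual f ⁅x, w⁆ := rfl

instance : LieModule ℂ (MatC m) (Dl m M) where
  smul_lie c x f := by
    apply LinearMap.ext; intro w
    show Dl.toDual (dbr (c • x) f) w = c • Dl.toDual (dbr x f) w
    simp only [dbr_apply, smul_lie, LinearMap.map_smul, smul_eq_mul, smul_neg]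
    ring
  lie_smul c x f := by
    apply LinearMap.ext; intro w
    show Dl.toDual (dbr x (c • f)) w = c • Dl.toDual (dbr x f) w
    have : Dl.toDual (c • f) = c • Dl.toDual f := rfl
    simp only [dbr_apply, this, LinearMap.smul_apply, smul_eq_mul, smul_neg]
    ring

instance [FiniteDimensional ℂ M] : FiniteDimensional ℂ (Dl m M) :=
  inferInstanceAs (FiniteDimensional ℂ (Module.Dual ℂ M))

instance [Nontrivial M] [FiniteDimensional ℂ M] : Nontrivial (Dl m M) :=
  inferInstanceAs (Nontrivial (Module.Dual ℂ M))

section HighestWeight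

variable {m : ℕ} {M : Type*} [AddCommGroup M] [Module ℂ M]
  [LieRingModule (MatC m) M] [LieModule ℂ (MatC m) M] [FiniteDimensional ℂ M] [Nontrivial M]

/-- The diagonal matrix units as elements of the diagonal subalgebra. -/
def ek (k : Fin m) : ↥(diagSub m) := ⟨Matrix.diagonal (Pi.single k 1), ⟨_, rfl⟩⟩

/-- A linear ordering functional on characters of the diagonal subalgebra. -/
def Lfun (χ : ↥(diagSub m) → ℂ) : ℝ := ∑ k : Fin m, ((m : ℝ) - (k : ℕ)) * (χ (ek k)).re

lemma weight_nonempty : Nonempty (Weight ℂ ↥(diagSub m) (Dl m M)) := by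
  rcases isEmpty_or_nonempty (Weight ℂ ↥(diagSub m) (Dl m M)) with hE | h
  · have htop := iSup_genWeightSpace_eq_top' ℂ ↥(diagSub m) (Dl m M)
    rw [iSup_of_empty] at htop
    obtain ⟨f, hf⟩ := exists_ne (0 : Dl m M)
    have : f ∈ (⊥ : LieSubmodule ℂ ↥(diagSub m) (Dl m M)) := htop ▸ LieSubmodule.mem_top f
    rw [LieSubmodule.mem_bot] at this
    exact absurd this hf
  · exact h

/-- The root functional attached to the matrix unit `E i j`. -/
def rootFun (i j : Fin m) : ↥(diagSub m) → ℂ := fun t => (t : MatC m) i i - (t : MatC m) j j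

lemma stdBasis_mem_rootSpace (i j : Fin m) :
    (Matrix.single i j (1:ℂ) : MatC m) ∈ LieAlgebra.rootSpace (diagSub m) (rootFun i j) := by
  rw [mem_genWeightSpace]
  intro t
  obtain ⟨d, hd⟩ := t.2
  refine ⟨1, ?_⟩
  rw [pow_one]
  simp only [LinearMap.sub_apply, toEnd_apply_apply, LinearMap.smul_apply, Module.End.one_apply,
    LieSubalgebra.coe_bracket_of_module, Ring.lie_def, rootFun, hd]
  ext a b
  simp only [Matrix.sub_apply, Matrix.smul_apply, Matrix.diagonal_mul, Matrix.mul_diagonal,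
    Matrix.diagonal_apply_eq, Matrix.single, Matrix.of_apply, smul_eq_mul]
  by_cases ha : i = a <;> by_cases hb : j = b <;> simp_all


lemma rootFun_ek (i j k : Fin m) :
    rootFun i j (ek k) = (if i = k then (1:ℂ) else 0) - (if j = k then 1 else 0) := by
  simp [rootFun, ek, Matrix.diagonal_apply_eq, Pi.single_apply]

lemma exists_covector :
    ∃ ξ : Module.Dual ℂ M, ξ ≠ 0 ∧
      ∀ x : MatC m, (∀ ⦃i j : Fin m⦄, j < i → x i j = 0) →
        ∃ c : ℂ, ∀ w : M, ξ ⁅x, w⁆ = c * ξ w := by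
  have hne : Nonempty (Weight ℂ ↥(diagSub m) (Dl m M)) := weight_nonempty
  obtain ⟨χ, hχmax⟩ :=
    Finite.exists_max (fun χ : Weight ℂ ↥(diagSub m) (Dl m M) => Lfun (χ : ↥(diagSub m) → ℂ))
  obtain ⟨ξ, hξ0, hξeig⟩ := exists_forall_lie_eq_smul ℂ ↥(diagSub m) (Dl m M) χ
  have hmem : ξ ∈ genWeightSpace (Dl m M) (χ : ↥(diagSub m) → ℂ) := by
    rw [mem_genWeightSpace]
    intro t
    refine ⟨1, ?_⟩
    rw [pow_one]
    simp [LinearMap.sub_apply, toEnd_apply_apply, hξeig t]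
  have hkill : ∀ i j : Fin m, i < j → ⁅(Matrix.single i j (1:ℂ) : MatC m), ξ⁆ = 0 := by
    intro i j hij
    have hbot : genWeightSpace (Dl m M) (rootFun i j + (χ : ↥(diagSub m) → ℂ)) = ⊥ := by
      by_contra hne'
      let ψ : Weight ℂ ↥(diagSub m) (Dl m M) := ⟨_, hne'⟩
      have h1 : Lfun (ψ : ↥(diagSub m) → ℂ) ≤ Lfun (χ : ↥(diagSub m) → ℂ) := hχmax ψ
      have hψ : (ψ : ↥(diagSub m) → ℂ) = rootFun i j + (χ : ↥(diagSub m) → ℂ) := rfl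
      have key : ∀ k : Fin m, ((m : ℝ) - (k : ℕ)) * (((rootFun i j + (χ : ↥(diagSub m) → ℂ)) (ek k)).re)
          = ((if i = k then ((m : ℝ) - (k : ℕ)) else 0) - (if j = k then ((m : ℝ) - (k : ℕ)) else 0))
            + ((m : ℝ) - (k : ℕ)) * ((χ (ek k)).re) := by
        intro k
        rw [Pi.add_apply, Complex.add_re, rootFun_ek]
        split_ifs <;> simp <;> ring
      have h2 : Lfun (rootFun i j + (χ : ↥(diagSub m) → ℂ))
          = Lfun (χ : ↥(diagSub m) → ℂ) + (((j : ℕ) : ℝ) - ((i : ℕ) : ℝ)) := by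
        unfold Lfun
        rw [Finset.sum_congr rfl (fun k _ => key k), Finset.sum_add_distrib,
          Finset.sum_sub_distrib, Finset.sum_ite_eq, Finset.sum_ite_eq]
        simp only [Finset.mem_univ, if_true]
        ring
      rw [hψ, h2] at h1
      have hij' : ((i : ℕ) : ℝ) < ((j : ℕ) : ℝ) := by exact_mod_cast hij
      linarith
    have hmem2 := LieAlgebra.lie_mem_genWeightSpace_of_mem_genWeightSpace
      (stdBasis_mem_rootSpace i j) hmem
    rw [hbot] at hmem2
    exact (LieSubmodule.mem_bot _).mp hmem2
  -- conclude
  refine ⟨Dl.toDual ξ, fun h => hξ0 h, ?_⟩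
  intro x hx
  set d : MatC m := Matrix.diagonal (fun k => x k k) with hd
  have hdm : d ∈ diagSub m := ⟨_, rfl⟩
  set n : MatC m := x - d with hn
  have hn0 : ∀ i j : Fin m, ¬ i < j → n i j = 0 := by
    intro i j hij
    rcases eq_or_lt_of_le (not_lt.mp hij) with h | h
    · subst h
      simp [hn, hd, Matrix.sub_apply, Matrix.diagonal_apply_eq]
    · simp [hn, hd, Matrix.sub_apply, hx h, Matrix.diagonal_apply_ne _ (ne_of_gt h)]
  have hnlie : ⁅n, ξ⁆ = 0 := by
    have hrepr : n = ∑ i : Fin m, ∑ j : Fin m, Matrix.single i j (n i j) :=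
      matrix_eq_sum_single n
    have hterm : ∀ i j : Fin m, ⁅(Matrix.single i j (n i j) : MatC m), ξ⁆ = 0 := by
      intro i j
      rcases lt_or_ge i j with h | h
      · have he : Matrix.single i j (n i j) = n i j • Matrix.single i j (1:ℂ) := by
          rw [Matrix.smul_single, smul_eq_mul, mul_one]
        rw [he, smul_lie, hkill i j h, smul_zero]
      · rw [hn0 i j (not_lt.mpr h), Matrix.single_zero, zero_lie]
    have hT : ∀ y : MatC m, ⁅y, ξ⁆
        = ((toEnd ℂ (MatC m) (Dl m M) : MatC m →ₗ[ℂ] Module.End ℂ (Dl m M)) y) ξ := fun y => rfl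
    rw [hT, hrepr, map_sum, LinearMap.sum_apply]
    refine Finset.sum_eq_zero fun i _ => ?_
    rw [map_sum, LinearMap.sum_apply]
    refine Finset.sum_eq_zero fun j _ => ?_
    rw [← hT]
    exact hterm i j
  have heig : ⁅x, ξ⁆ = χ (⟨d, hdm⟩ : ↥(diagSub m)) • ξ := by
    have hxdn : x = d + n := by rw [hn]; abel
    have hdlie : ⁅d, ξ⁆ = χ (⟨d, hdm⟩ : ↥(diagSub m)) • ξ := by
      have := hξeig (⟨d, hdm⟩ : ↥(diagSub m))
      rwa [LieSubalgebra.coe_bracket_of_module] at this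
    rw [hxdn, add_lie, hdlie, hnlie, add_zero]
  refine ⟨-(χ (⟨d, hdm⟩ : ↥(diagSub m))), fun w => ?_⟩
  have h1 : Dl.toDual ⁅x, ξ⁆ w = - Dl.toDual ξ ⁅x, w⁆ := Dl.lie_apply x ξ w
  rw [heig] at h1
  have h2 : Dl.toDual (χ (⟨d, hdm⟩ : ↥(diagSub m)) • ξ) w
      = χ (⟨d, hdm⟩ : ↥(diagSub m)) * Dl.toDual ξ w := rfl
  rw [h2] at h1
  have := congrArg Neg.neg h1
  rw [neg_neg] at this
  rw [← this]
  ring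

end HighestWeight

section Main

variable {m : ℕ} {M : Type*} [AddCommGroup M] [Module ℂ M]
  [LieRingModule (MatC m) M] [LieModule ℂ (MatC m) M]

/-- The "skew-symmetric part" built from the strictly lower triangular part of a matrix. -/
def lowSkew (x : MatC m) : MatC m :=
  Matrix.of fun i j => if j < i then x i j else if i < j then -x j i else 0

lemma lowSkew_skew (x : MatC m) : (lowSkew x)ᵀ = -(lowSkew x) := by
  ext i j
  simp only [Matrix.transpose_apply, Matrix.neg_apply, lowSkew, Matrix.of_apply]
  rcases lt_trichotomy i j with h | h | h
  · rw [if_pos h, if_neg (lt_asymm h), if_pos h, neg_neg]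
  · subst h
    simp [lt_irrefl]
  · rw [if_neg (lt_asymm h), if_neg (lt_asymm h), if_pos h, if_pos h]

lemma upp_mem (x : MatC m) : x - lowSkew x ∈ upSub m := by
  show ∀ ⦃i j : Fin m⦄, j < i → (x - lowSkew x) i j = 0
  intro i j hji
  simp only [Matrix.sub_apply, lowSkew, Matrix.of_apply, if_pos hji]
  ring

lemma up_mem_iff (x : MatC m) : x ∈ upSub m ↔ ∀ ⦃i j : Fin m⦄, j < i → x i j = 0 := Iff.rfl

/-- Vectors annihilated by all skew-symmetric matrices. -/
def soInv : Set M := {v | ∀ x : MatC m, xᵀ = -x → ⁅x, v⁆ = 0}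

variable [FiniteDimensional ℂ M] [LieModule.IsIrreducible ℂ (MatC m) M]

lemma inv_eq_zero_of_pairing_zero (ξ : Module.Dual ℂ M) (hξ0 : ξ ≠ 0)
    (hξ : ∀ x : MatC m, (∀ ⦃i j : Fin m⦄, j < i → x i j = 0) →
      ∃ c : ℂ, ∀ w : M, ξ ⁅x, w⁆ = c * ξ w)
    (v : M) (hv : ∀ x : MatC m, xᵀ = -x → ⁅x, v⁆ = 0) (h0 : ξ v = 0) : v = 0 := by
  by_contra hvne
  set W := LieSubmodule.lieSpan ℂ ↥(upSub m) ({v} : Set M) with hWdef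
  have hvW : v ∈ W := LieSubmodule.subset_lieSpan rfl
  -- W is stable under all of gl_m
  have hstable : ∀ w ∈ W, ∀ x : MatC m, ⁅x, w⁆ ∈ W := by
    let W' : LieSubmodule ℂ ↥(upSub m) M :=
      { carrier := {w | w ∈ W ∧ ∀ x : MatC m, ⁅x, w⁆ ∈ W}
        add_mem' := fun ha hb => ⟨W.add_mem ha.1 hb.1,
          fun x => by rw [lie_add]; exact W.add_mem (ha.2 x) (hb.2 x)⟩
        zero_mem' := ⟨W.zero_mem, fun x => by rw [lie_zero]; exact W.zero_mem⟩
        smul_mem' := fun c w hw => ⟨W.smul_mem c hw.1,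
          fun x => by rw [lie_smul]; exact W.smul_mem c (hw.2 x)⟩
        lie_mem := by
          intro y w hw
          refine ⟨W.lie_mem hw.1, fun x => ?_⟩
          rw [LieSubalgebra.coe_bracket_of_module, leibniz_lie x (y : MatC m) w]
          refine W.add_mem (hw.2 ⁅x, (y : MatC m)⁆) ?_
          have h2 := W.lie_mem (x := y) (hw.2 x)
          rwa [LieSubalgebra.coe_bracket_of_module] at h2 }
    have hv' : v ∈ W' := by
      refine ⟨hvW, fun x => ?_⟩
      have hsum : lowSkew x + (x - lowSkew x) = x := by abel
      have h1 : ⁅x, v⁆ = ⁅lowSkew x, v⁆ + ⁅x - lowSkew x, v⁆ := by rw [← add_lie, hsum]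
      rw [h1, hv _ (lowSkew_skew x), zero_add]
      have h2 := W.lie_mem (x := (⟨x - lowSkew x, upp_mem x⟩ : ↥(upSub m))) hvW
      rwa [LieSubalgebra.coe_bracket_of_module] at h2
    have hle : W ≤ W' := LieSubmodule.lieSpan_le.mpr (Set.singleton_subset_iff.mpr hv')
    exact fun w hw x => (hle hw).2 x
  -- hence W is everything
  have htop : ∀ w : M, w ∈ W := by
    let Wg : LieSubmodule ℂ (MatC m) M :=
      { W.toSubmodule with lie_mem := fun {x} {w} hw => hstable w hw x }
    have hWgW : ∀ w : M, w ∈ Wg ↔ w ∈ W := fun w => Iff.rfl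
    have hne : Wg ≠ ⊥ := by
      intro hbot
      have hvWg : v ∈ Wg := (hWgW v).mpr hvW
      rw [hbot, LieSubmodule.mem_bot] at hvWg
      exact hvne hvWg
    rcases eq_bot_or_eq_top Wg with h | h
    · exact absurd h hne
    · intro w
      have : w ∈ Wg := by rw [h]; exact LieSubmodule.mem_top w
      exact (hWgW w).mp this
  -- but ξ kills W
  have hzero : ∀ w : M, ξ w = 0 := by
    let Z : LieSubmodule ℂ ↥(upSub m) M :=
      { carrier := {w | ξ w = 0}
        add_mem' := fun {a b} ha hb => by
          show ξ (a + b) = 0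
          rw [map_add, ha, hb, add_zero]
        zero_mem' := map_zero ξ
        smul_mem' := fun c w hw => by
          show ξ (c • w) = 0
          rw [LinearMap.map_smul, hw, smul_zero]
        lie_mem := by
          intro y w hw
          obtain ⟨c, hc⟩ := hξ (y : MatC m) y.2
          show ξ ⁅y, w⁆ = 0
          rw [LieSubalgebra.coe_bracket_of_module, hc, hw, mul_zero] }
    have hle : W ≤ Z := LieSubmodule.lieSpan_le.mpr (Set.singleton_subset_iff.mpr h0)
    exact fun w => hle (htop w)
  exact hξ0 (LinearMap.ext hzero)

end Main
end S15


theorem statement15 (m : ℕ) (hm : 1 ≤ m) (M : Type*) [AddCommGroup M] [Module ℂ M]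
    [LieRingModule (MatC m) M] [LieModule ℂ (MatC m) M] [FiniteDimensional ℂ M]
    [LieModule.IsIrreducible ℂ (MatC m) M] :
    Module.finrank ℂ ↥(soInvariants m M) ≤ 1 := by
  have hnt : Nontrivial M := LieModule.nontrivial_of_isIrreducible (R := ℂ) (L := MatC m) (M := M)
  obtain ⟨ξ, hξ0, hξ⟩ := S15.exists_covector (m := m) (M := M)
  have hinj : Function.Injective (ξ ∘ₗ (soInvariants m M).subtype) := by
    rw [← LinearMap.ker_eq_bot, LinearMap.ker_eq_bot']
    intro u hu
    have h := S15.inv_eq_zero_of_pairing_zero ξ hξ0 hξ u.1 u.2 hu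
    exact Subtype.ext h
  have hle := LinearMap.finrank_le_finrank_of_injective hinj
  simpa using hle
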